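/- Let 0 < p ≤ s ≤ ∞ and -n < α ≤ n(p/s - 1). Then L^s(ℝⁿ) ⊆ BL^{p,s}_{|x|^α}(ℝⁿ), with ‖f‖_{BL^{p,s}_{|x|^α}} ≤ C ‖f‖_{L^s}. -/

import Mathlib

open MeasureTheory Metric ENNReal Filter
open scoped ENNReal NNReal

noncomputable section

abbrev Rn (n : ℕ) := EuclideanSpace ℝ (Fin n)

/-- A `(p,s,α)`-block: supported in a closed ball `B(x₀,r)` with
`‖a‖_{L^s} ≤ |B|^{-α/(pn)-1/p+1/s}` (with `1/s = 0` when `s = ∞`). -/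
def IsBlock (n : ℕ) (p : ℝ) (s : ℝ≥0∞) (α : ℝ) (a : Rn n → ℝ) : Prop :=
  Measurable a ∧
  ∃ x₀ : Rn n, ∃ r : ℝ, 0 < r ∧ (∀ x, x ∉ closedBall x₀ r → a x = 0) ∧
    eLpNorm a s volume ≤
      ENNReal.ofReal ((volume (closedBall x₀ r)).toReal ^ (-α / (p * n) - 1 / p + s.toReal⁻¹))

/-- A decomposition `f = Σ l k • a k` (a.e. convergence) into `(p,s,α)`-blocks with
`Σ |l k| ^ min p 1 < ∞`. -/
def IsBLDecomp (n : ℕ) (p : ℝ) (s : ℝ≥0∞) (α : ℝ)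
    (f : Rn n → ℝ) (l : ℕ → ℝ) (a : ℕ → Rn n → ℝ) : Prop :=
  (∀ k, IsBlock n p s α (a k)) ∧ Summable (fun k => |l k| ^ min p 1) ∧
  (∀ᵐ x : Rn n ∂volume, HasSum (fun k => l k * a k x) (f x))

/-- Membership in the block space `BL^{p,s}_{|x|^α}`. -/
def MemBL (n : ℕ) (p : ℝ) (s : ℝ≥0∞) (α : ℝ) (f : Rn n → ℝ) : Prop :=
  ∃ l a, IsBLDecomp n p s α f l a

/-- The quasinorm of `BL^{p,s}_{|x|^α}`:
`inf (Σ |l k| ^ min p 1)^(1/min p 1)` over all block decompositions. -/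
def BLnorm (n : ℕ) (p : ℝ) (s : ℝ≥0∞) (α : ℝ) (f : Rn n → ℝ) : ℝ :=
  sInf { c | ∃ l a, IsBLDecomp n p s α f l a ∧
    c = (∑' k, |l k| ^ min p 1) ^ (min p 1)⁻¹ }

open scoped Topology in
lemma tail_small {n : ℕ} {s : ℝ≥0∞} {g : Rn n → ℝ} (hg : Measurable g)
    (hmem : MemLp g s volume) (hs0 : s ≠ 0) (hsT : s ≠ ⊤) {ε : ℝ≥0∞} (hε : 0 < ε) :
    ∃ R : ℝ, eLpNorm ((closedBall (0:Rn n) R)ᶜ.indicator g) s volume ≤ ε := by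
  rcases eq_or_ne ε ⊤ with rfl | hεT
  · exact ⟨0, le_top⟩
  set s' := s.toReal with hs'def
  have hs' : 0 < s' := ENNReal.toReal_pos hs0 hsT
  set F : Rn n → ℝ≥0∞ := fun x => (‖g x‖₊ : ℝ≥0∞) ^ s' with hF
  have hFmeas : Measurable F := hg.nnnorm.coe_nnreal_ennreal.pow_const s'
  have hI : ∫⁻ x, F x ∂volume < ⊤ :=
    lintegral_rpow_enorm_lt_top_of_eLpNorm_lt_top hs0 hsT hmem.eLpNorm_lt_top
  set ν := volume.withDensity F with hν
  set S : ℕ → Set (Rn n) := fun m => (closedBall (0:Rn n) (m:ℝ))ᶜ with hS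
  have hSm : ∀ m, MeasurableSet (S m) := fun m => measurableSet_closedBall.compl
  have hanti : Antitone S := fun i j hij =>
    Set.compl_subset_compl.2 (closedBall_subset_closedBall (by exact_mod_cast hij))
  have hiInter : ⋂ m, S m = ∅ := by
    ext x
    simp only [Set.mem_iInter, Set.mem_empty_iff_false, iff_false, not_forall, not_not]
    obtain ⟨m, hm⟩ := exists_nat_ge (dist x (0:Rn n))
    exact ⟨m, not_not.2 (mem_closedBall.2 hm)⟩
  have hfin : ∀ m, ν (S m) < ⊤ := by
    intro m
    calc ν (S m) ≤ ν Set.univ := measure_mono (Set.subset_univ _)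
    _ = ∫⁻ x, F x ∂volume := by rw [hν, withDensity_apply _ MeasurableSet.univ, setLIntegral_univ]
    _ < ⊤ := hI
  have htend : Tendsto (ν ∘ S) atTop (𝓝 0) := by
    have := tendsto_measure_iInter_atTop (μ := ν) (fun m => (hSm m).nullMeasurableSet)
      hanti ⟨0, (hfin 0).ne⟩
    rwa [hiInter, measure_empty] at this
  have hδ : (0:ℝ≥0∞) < ε ^ s' := ENNReal.rpow_pos hε hεT
  obtain ⟨m, hm⟩ := (htend.eventually (gt_mem_nhds hδ)).exists
  refine ⟨(m:ℝ), ?_⟩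
  have hcalc : eLpNorm ((S m).indicator g) s volume = (ν (S m)) ^ (1/s') := by
    rw [eLpNorm_eq_lintegral_rpow_enorm_toReal hs0 hsT]
    congr 1
    rw [hν, withDensity_apply _ (hSm m), ← lintegral_indicator (hSm m)]
    congr 1
    ext x
    by_cases hx : x ∈ S m
    · simp [Set.indicator_of_mem hx, hF, hs'def, enorm_eq_nnnorm]
    · simp [Set.indicator_of_notMem hx, hF, ENNReal.zero_rpow_of_pos hs', ENNReal.toReal_pos hs0 hsT]
  rw [hcalc]
  calc (ν (S m)) ^ (1/s') ≤ (ε ^ s') ^ (1/s') :=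
        ENNReal.rpow_le_rpow hm.le (by positivity)
  _ = ε := by
      rw [← ENNReal.rpow_mul, mul_one_div_cancel hs'.ne', ENNReal.rpow_one]

lemma eLpNorm_indicator_mono_set {α : Type*} [MeasurableSpace α] {μ : Measure α}
    {S T : Set α} (hST : S ⊆ T) (g : α → ℝ) {s : ℝ≥0∞} :
    eLpNorm (S.indicator g) s μ ≤ eLpNorm (T.indicator g) s μ := by
  apply eLpNorm_mono
  intro x
  by_cases hx : x ∈ S
  · rw [Set.indicator_of_mem hx, Set.indicator_of_mem (hST hx)]
  · simp [Set.indicator_of_notMem hx]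


/-- if `0 < p ≤ s ≤ ∞` and `-n < α ≤ n(p/s-1)`, then
`L^s ⊆ BL^{p,s}_{|x|^α}` with `‖f‖_{BL} ≤ C ‖f‖_{L^s}`. -/
theorem Ls_subset_BL (n : ℕ) (hn : 0 < n) (p : ℝ) (s : ℝ≥0∞) (α : ℝ)
    (hp : 0 < p) (hps : ENNReal.ofReal p ≤ s)
    (hα1 : -(n : ℝ) < α) (hα2 : α ≤ (n : ℝ) * (p * s.toReal⁻¹ - 1)) :
    ∃ C > (0 : ℝ), ∀ f : Rn n → ℝ, MemLp f s volume →
      MemBL n p s α f ∧ BLnorm n p s α f ≤ C * (eLpNorm f s volume).toReal := by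
  classical
  have hsT : s ≠ ⊤ := by
    intro h
    rw [h] at hα2
    simp at hα2
    linarith
  have hs0 : s ≠ 0 := by
    intro h
    rw [h] at hps
    exact ((ENNReal.ofReal_pos.2 hp).trans_le hps).false
  have hs' : 0 < s.toReal := ENNReal.toReal_pos hs0 hsT
  have hn' : (0:ℝ) < n := Nat.cast_pos.2 hn
  set e : ℝ := -α / (p * (n:ℝ)) - 1 / p + s.toReal⁻¹ with hedef
  have he : 0 ≤ e := by
    have h2 : e = (-α + (n:ℝ) * (p * s.toReal⁻¹ - 1)) / (p * (n:ℝ)) := by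
      rw [hedef]
      field_simp
      ring
    rw [h2]
    exact div_nonneg (by linarith) (by positivity)
  set pb : ℝ := min p 1 with hpbdef
  have hpb : 0 < pb := lt_min hp one_pos
  set q : ℝ := (2⁻¹:ℝ) ^ pb with hqdef
  have hq0 : 0 ≤ q := Real.rpow_nonneg (by norm_num) _
  have hq1 : q < 1 := Real.rpow_lt_one (by norm_num) (by norm_num) hpb
  have hq2 : 0 < 1 - q := by linarith
  have hvol1 : 0 < (volume (closedBall (0:Rn n) 1)).toReal :=
    ENNReal.toReal_pos (measure_closedBall_pos volume 0 one_pos).ne' measure_closedBall_lt_top.ne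
  set m₀ : ℝ := (volume (closedBall (0:Rn n) 1)).toReal ^ e with hm₀def
  have hm₀ : 0 < m₀ := Real.rpow_pos_of_pos hvol1 _
  set C : ℝ := (2 / m₀) * ((1 - q)⁻¹) ^ pb⁻¹ with hCdef
  have hC : 0 < C := mul_pos (div_pos two_pos hm₀) (Real.rpow_pos_of_pos (inv_pos.2 hq2) _)
  refine ⟨C, hC, ?_⟩
  intro f hf
  obtain ⟨g, hgsm, hfg⟩ : ∃ g, StronglyMeasurable g ∧ f =ᵐ[volume] g :=
    ⟨hf.1.mk f, hf.1.stronglyMeasurable_mk, hf.1.ae_eq_mk⟩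
  have hgmeas : Measurable g := hgsm.measurable
  have hgm : MemLp g s volume := hf.ae_eq hfg
  set N := eLpNorm f s volume with hNdef
  have hNT : N ≠ ⊤ := hf.eLpNorm_ne_top
  have hNg : eLpNorm g s volume = N := (eLpNorm_congr_ae hfg).symm
  set Nr := N.toReal with hNrdef
  have hNr0 : 0 ≤ Nr := ENNReal.toReal_nonneg
  have hρ : ∀ j : ℕ, ∃ R : ℝ,
      eLpNorm ((closedBall (0:Rn n) R)ᶜ.indicator g) s volume
        ≤ ENNReal.ofReal ((2⁻¹:ℝ)^j * Nr) := by
    intro j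
    rcases eq_or_ne N 0 with hN0 | hN0
    · refine ⟨0, ?_⟩
      calc eLpNorm _ s volume ≤ eLpNorm g s volume := eLpNorm_indicator_le g
      _ = 0 := by rw [hNg, hN0]
      _ ≤ _ := zero_le
    · have hNr : 0 < Nr := ENNReal.toReal_pos hN0 hNT
      exact tail_small hgmeas hgm hs0 hsT
        (ENNReal.ofReal_pos.2 (mul_pos (by positivity) hNr))
  choose ρ hρ' using hρ
  set r : ℕ → ℝ := fun j => 1 + ∑ i ∈ Finset.range (j+1), (|ρ i| + 1) with hrdef
  have hrmono : Monotone r := by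
    intro i j hij
    exact add_le_add_right (Finset.sum_le_sum_of_subset_of_nonneg
      (Finset.range_subset_range.2 (by omega)) (fun k _ _ => by positivity)) 1
  have hrge : ∀ j : ℕ, (j:ℝ) ≤ r j := by
    intro j
    have h1 := Finset.card_nsmul_le_sum (Finset.range (j+1))
      (fun i => |ρ i| + 1) 1 (fun i _ => by show (1:ℝ) ≤ |ρ i| + 1; linarith [abs_nonneg (ρ i)])
    simp only [Finset.card_range, nsmul_eq_mul, mul_one] at h1
    have : ((j:ℝ)+1) ≤ ∑ i ∈ Finset.range (j+1), (|ρ i| + 1) := by exact_mod_cast h1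
    simp only [hrdef]
    linarith
  have hrρ : ∀ j, ρ j ≤ r j := by
    intro j
    have h1 : |ρ j| + 1 ≤ ∑ i ∈ Finset.range (j+1), (|ρ i| + 1) :=
      Finset.single_le_sum (f := fun i => |ρ i| + 1) (fun i _ => by positivity)
        (Finset.self_mem_range_succ j)
    have h2 := le_abs_self (ρ j)
    simp only [hrdef]
    linarith
  have hr1 : ∀ j, 1 ≤ r j := by
    intro j
    have h1 : (0:ℝ) ≤ ∑ i ∈ Finset.range (j+1), (|ρ i| + 1) :=
      Finset.sum_nonneg fun i _ => by positivity
    simp only [hrdef]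
    linarith
  have hr0 : ∀ j, 0 < r j := fun j => lt_of_lt_of_le one_pos (hr1 j)
  set A : ℕ → Set (Rn n) := fun j =>
    closedBall (0:Rn n) (r j) \ ⋃ i ∈ Finset.range j, closedBall (0:Rn n) (r i) with hAdef
  have hAmem : ∀ (x : Rn n) (j), x ∈ A j ↔
      (x ∈ closedBall (0:Rn n) (r j) ∧ ∀ i, i < j → x ∉ closedBall (0:Rn n) (r i)) := by
    intro x j
    simp [hAdef, Finset.mem_range]
  have hAms : ∀ j, MeasurableSet (A j) := fun j =>
    measurableSet_closedBall.diff
      ((Finset.range j).measurableSet_biUnion fun i _ => measurableSet_closedBall)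
  have hAsub : ∀ j, A j ⊆ closedBall (0:Rn n) (r j) := fun j => Set.diff_subset
  set Λ : ℕ → ℝ≥0∞ := fun j => eLpNorm ((A j).indicator g) s volume with hΛdef
  have hΛle : ∀ j, Λ j ≤ N := fun j => (eLpNorm_indicator_le g).trans hNg.le
  have hΛT : ∀ j, Λ j ≠ ⊤ := fun j => ((hΛle j).trans_lt hNT.lt_top).ne
  have hΛb : ∀ j, Λ j ≤ ENNReal.ofReal (2 * (2⁻¹:ℝ)^j * Nr) := by
    intro j
    cases j with
    | zero =>
      calc Λ 0 ≤ N := hΛle 0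
      _ = ENNReal.ofReal Nr := (ENNReal.ofReal_toReal hNT).symm
      _ ≤ _ := ENNReal.ofReal_le_ofReal (by rw [pow_zero]; linarith)
    | succ k =>
      have h1 : A (k+1) ⊆ (closedBall (0:Rn n) (ρ k))ᶜ := by
        intro x hx
        have h2 := ((hAmem x (k+1)).1 hx).2 k (Nat.lt_succ_self k)
        intro hc
        exact h2 (closedBall_subset_closedBall (hrρ k) hc)
      calc Λ (k+1) ≤ eLpNorm (((closedBall (0:Rn n) (ρ k))ᶜ).indicator g) s volume :=
            eLpNorm_indicator_mono_set h1 g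
      _ ≤ ENNReal.ofReal ((2⁻¹:ℝ)^k * Nr) := hρ' k
      _ = ENNReal.ofReal (2 * (2⁻¹:ℝ)^(k+1) * Nr) := by
          congr 1
          rw [pow_succ]
          ring
  have hm₀le : ∀ j, m₀ ≤ (volume (closedBall (0:Rn n) (r j))).toReal ^ e := by
    intro j
    refine Real.rpow_le_rpow hvol1.le ?_ he
    refine (ENNReal.toReal_le_toReal measure_closedBall_lt_top.ne
      measure_closedBall_lt_top.ne).2 ?_
    exact measure_mono (closedBall_subset_closedBall (hr1 j))
  set l : ℕ → ℝ := fun j => (Λ j).toReal / m₀ with hldef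
  set a : ℕ → Rn n → ℝ := fun j =>
    if Λ j = 0 then (fun _ => 0)
    else fun x => (m₀ / (Λ j).toReal) * (A j).indicator g x with hadef
  have hblock : ∀ j, IsBlock n p s α (a j) := by
    intro j
    by_cases hj : Λ j = 0
    · refine ⟨by simp [hadef, hj], 0, r j, hr0 j, fun x _ => by simp [hadef, hj], ?_⟩
      have h0 : a j = fun _ => (0:ℝ) := by simp [hadef, hj]
      rw [h0, eLpNorm_zero']
      exact zero_le
    · have hΛr : (Λ j).toReal ≠ 0 := ENNReal.toReal_ne_zero.2 ⟨hj, hΛT j⟩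
      have hΛrpos : 0 < (Λ j).toReal := lt_of_le_of_ne ENNReal.toReal_nonneg (Ne.symm hΛr)
      have haj : a j = fun x => (m₀/(Λ j).toReal) * (A j).indicator g x := by
        simp [hadef, hj]
      refine ⟨?_, 0, r j, hr0 j, ?_, ?_⟩
      · rw [haj]; exact (hgmeas.indicator (hAms j)).const_mul _
      · intro x hx
        rw [haj]
        have hxA : x ∉ A j := fun h => hx (hAsub j h)
        simp [Set.indicator_of_notMem hxA]
      · rw [haj]
        have hsmul : (fun x => (m₀/(Λ j).toReal) * (A j).indicator g x)
            = (m₀/(Λ j).toReal) • ((A j).indicator g) := rfl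
        rw [hsmul, eLpNorm_const_smul]
        show (‖m₀/(Λ j).toReal‖₊ : ℝ≥0) • Λ j
          ≤ ENNReal.ofReal ((volume (closedBall (0:Rn n) (r j))).toReal ^ e)
        calc (‖m₀/(Λ j).toReal‖₊ : ℝ≥0) • Λ j
            = ENNReal.ofReal (m₀/(Λ j).toReal) * ENNReal.ofReal ((Λ j).toReal) := by
              rw [ENNReal.smul_def, smul_eq_mul,
                ← enorm_eq_nnnorm, Real.enorm_eq_ofReal (by positivity), ENNReal.ofReal_toReal (hΛT j)]
        _ = ENNReal.ofReal (m₀/(Λ j).toReal * (Λ j).toReal) :=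
              (ENNReal.ofReal_mul (by positivity)).symm
        _ = ENNReal.ofReal m₀ := by rw [div_mul_cancel₀ _ hΛr]
        _ ≤ _ := ENNReal.ofReal_le_ofReal (hm₀le j)
  have hlnn : ∀ j, 0 ≤ l j := fun j => div_nonneg ENNReal.toReal_nonneg hm₀.le
  have hc0 : (0:ℝ) ≤ 2*Nr/m₀ := div_nonneg (by linarith) hm₀.le
  have hlb : ∀ j, l j ≤ (2*Nr/m₀) * (2⁻¹:ℝ)^j := by
    intro j
    have h1 : (Λ j).toReal ≤ 2*(2⁻¹:ℝ)^j*Nr :=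
      ENNReal.toReal_le_of_le_ofReal
        (mul_nonneg (by positivity) hNr0) (hΛb j)
    have h2 : (Λ j).toReal / m₀ ≤ (2*(2⁻¹:ℝ)^j*Nr)/m₀ := by
      rw [div_eq_mul_inv, div_eq_mul_inv]
      exact mul_le_mul_of_nonneg_right h1 (inv_nonneg.2 hm₀.le)
    calc l j ≤ (2*(2⁻¹:ℝ)^j*Nr)/m₀ := h2
    _ = (2*Nr/m₀) * (2⁻¹:ℝ)^j := by ring
  have hpow : ∀ j : ℕ, ((2⁻¹:ℝ)^j) ^ pb = q ^ j := by
    intro j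
    rw [← Real.rpow_natCast (2⁻¹:ℝ) j, ← Real.rpow_mul (by norm_num : (0:ℝ) ≤ 2⁻¹),
      mul_comm, Real.rpow_mul (by norm_num : (0:ℝ) ≤ 2⁻¹), ← hqdef,
      Real.rpow_natCast]
  have hterm : ∀ j, |l j| ^ pb ≤ ((2*Nr/m₀) ^ pb) * q ^ j := by
    intro j
    rw [abs_of_nonneg (hlnn j)]
    have h1 : l j ^ pb ≤ ((2*Nr/m₀) * (2⁻¹:ℝ)^j) ^ pb :=
      Real.rpow_le_rpow (hlnn j) (hlb j) hpb.le
    refine h1.trans (le_of_eq ?_)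
    rw [Real.mul_rpow hc0 (by positivity), hpow j]
  have hgeo : Summable (fun j : ℕ => ((2*Nr/m₀) ^ pb) * q ^ j) :=
    (summable_geometric_of_lt_one hq0 hq1).mul_left _
  have hsum : Summable (fun j => |l j| ^ pb) :=
    Summable.of_nonneg_of_le (fun j => Real.rpow_nonneg (abs_nonneg _) _) hterm hgeo
  have htsum : ∑' j, |l j| ^ pb ≤ ((2*Nr/m₀) ^ pb) * (1-q)⁻¹ := by
    have h3 := Summable.tsum_le_tsum hterm hsum hgeo
    rwa [tsum_mul_left, tsum_geometric_of_lt_one hq0 hq1] at h3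
  have hzero : ∀ j, ∀ᵐ x ∂(volume : Measure (Rn n)), Λ j = 0 → (A j).indicator g x = 0 := by
    intro j
    by_cases hj : Λ j = 0
    · have h0 : (A j).indicator g =ᵐ[volume] 0 :=
        (eLpNorm_eq_zero_iff ((hgmeas.indicator (hAms j)).aestronglyMeasurable) hs0).1 hj
      filter_upwards [h0] with x hx _
      exact hx
    · filter_upwards with x h
      exact absurd h hj
  have hae : ∀ᵐ x ∂(volume : Measure (Rn n)), HasSum (fun j => l j * a j x) (f x) := by
    filter_upwards [hfg, ae_all_iff.2 hzero] with x hx hx2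
    have hex : ∃ j, x ∈ closedBall (0:Rn n) (r j) := by
      obtain ⟨m, hm⟩ := exists_nat_ge (dist x (0:Rn n))
      exact ⟨m, mem_closedBall.2 (hm.trans (hrge m))⟩
    set j₀ := Nat.find hex with hj₀
    have hxA : x ∈ A j₀ := (hAmem x j₀).2
      ⟨Nat.find_spec hex, fun i hi => Nat.find_min hex hi⟩
    have hstep : (fun j => l j * a j x) = fun j => (A j).indicator g x := by
      funext j
      by_cases hj : Λ j = 0
      · simp [hadef, hldef, hj, hx2 j hj]
      · have hΛr : (Λ j).toReal ≠ 0 := ENNReal.toReal_ne_zero.2 ⟨hj, hΛT j⟩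
        simp only [hadef, hldef, if_neg hj]
        field_simp

    rw [hstep, hx]
    have hone : ((A j₀).indicator g) x = g x := Set.indicator_of_mem hxA g
    have hother : ∀ i, i ≠ j₀ → (A i).indicator g x = 0 := by
      intro i hi
      apply Set.indicator_of_notMem
      intro hxi
      rcases lt_or_gt_of_ne hi with h | h
      · exact Nat.find_min hex h ((hAmem x i).1 hxi).1
      · exact ((hAmem x i).1 hxi).2 j₀ h (Nat.find_spec hex)
    have h4 := hasSum_single (f := fun i => (A i).indicator g x) j₀ hother
    simpa [hone] using h4
  have hdecomp : IsBLDecomp n p s α f l a := ⟨hblock, hsum, hae⟩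
  refine ⟨⟨l, a, hdecomp⟩, ?_⟩
  have hbdd : BddBelow { c | ∃ l a, IsBLDecomp n p s α f l a ∧
      c = (∑' k, |l k| ^ min p 1) ^ (min p 1)⁻¹ } := by
    refine ⟨0, fun c hc => ?_⟩
    obtain ⟨l', a', _, rfl⟩ := hc
    exact Real.rpow_nonneg (tsum_nonneg fun k => Real.rpow_nonneg (abs_nonneg _) _) _
  have h1 : BLnorm n p s α f ≤ (∑' k, |l k| ^ min p 1) ^ (min p 1)⁻¹ :=
    csInf_le hbdd ⟨l, a, hdecomp, rfl⟩
  refine h1.trans ?_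
  have h2 : (∑' k, |l k| ^ pb) ^ pb⁻¹ ≤ (((2*Nr/m₀) ^ pb) * (1-q)⁻¹) ^ pb⁻¹ :=
    Real.rpow_le_rpow (tsum_nonneg fun k => Real.rpow_nonneg (abs_nonneg _) _) htsum
      (by positivity)
  refine h2.trans (le_of_eq ?_)
  rw [Real.mul_rpow (Real.rpow_nonneg hc0 _) (inv_nonneg.2 hq2.le),
    Real.rpow_rpow_inv hc0 hpb.ne']
  rw [hCdef]
  ring
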